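/- The subgroup of GL(2,ℂ) generated by the matrices A₁, A₂, A₃ has exactly 48 elements and is isomorphic as a group to GL(2, 𝔽₃), the group of invertible 2×2 matrices over the field with three elements. (This group is the Shephard–Todd reflection group G₁₂.) -/

import Mathlib

open Matrix

noncomputable section

/-- i√2. -/
def s2 : ℂ := Complex.I * Real.sqrt 2

/-- R₁ = [[1,0,0],[0,1,0],[0,1−i√2,−1]]. -/
def R₁ : Matrix (Fin 3) (Fin 3) ℂ := !![1, 0, 0; 0, 1, 0; 0, 1 - s2, -1]

/-- R₂ = [[1,0,0],[0,−1+i√2,2],[0,1+i√2,1−i√2]]. -/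
def R₂ : Matrix (Fin 3) (Fin 3) ℂ := !![1, 0, 0; 0, -1 + s2, 2; 0, 1 + s2, 1 - s2]

/-- R₃ = [[1,0,0],[(1+i√2)/2,1,−1−i√2],[1,0,−1]]. -/
def R₃ : Matrix (Fin 3) (Fin 3) ℂ := !![1, 0, 0; (1 + s2) / 2, 1, -1 - s2; 1, 0, -1]

/-- The translation matrix T_v for v = (v₁, v₂). -/
def T (v₁ v₂ : ℂ) : Matrix (Fin 3) (Fin 3) ℂ := !![1, 0, 0; v₁, 1, 0; v₂, 0, 1]

/-- A₁, the linear part of R₁. -/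
def A₁ : Matrix (Fin 2) (Fin 2) ℂ := !![1, 0; 1 - s2, -1]

/-- A₂, the linear part of R₂. -/
def A₂ : Matrix (Fin 2) (Fin 2) ℂ := !![-1 + s2, 2; 1 + s2, 1 - s2]

/-- A₃, the linear part of R₃. -/
def A₃ : Matrix (Fin 2) (Fin 2) ℂ := !![1, -1 - s2; 0, -1]

end

open scoped MatrixGroups

/-- The subgroup of GL(2,ℂ) generated by (the invertible-matrix lifts of) a set of
2×2 matrices. -/
noncomputable def genGL2 (S : Set (Matrix (Fin 2) (Fin 2) ℂ)) : Subgroup (GL (Fin 2) ℂ) :=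
  Subgroup.closure {g : GL (Fin 2) ℂ | (g : Matrix (Fin 2) (Fin 2) ℂ) ∈ S}


abbrev Z2 := ℤ × ℤ
def zmul (x y : Z2) : Z2 := (x.1*y.1 - 2*x.2*y.2, x.1*y.2 + x.2*y.1)
def zadd (x y : Z2) : Z2 := (x.1+y.1, x.2+y.2)
abbrev M4 := Z2 × Z2 × Z2 × Z2
def mmul (X Y : M4) : M4 :=
  (zadd (zmul X.1 Y.1) (zmul X.2.1 Y.2.2.1),
   zadd (zmul X.1 Y.2.1) (zmul X.2.1 Y.2.2.2),
   zadd (zmul X.2.2.1 Y.1) (zmul X.2.2.2 Y.2.2.1),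
   zadd (zmul X.2.2.1 Y.2.1) (zmul X.2.2.2 Y.2.2.2))
def mone : M4 := ((1,0),(0,0),(0,0),(1,0))
def a1 : M4 := ((1,0),(0,0),(1,-1),(-1,0))
def a2 : M4 := ((-1,1),(2,0),(1,1),(1,-1))
def a3 : M4 := ((1,0),(-1,-1),(0,0),(-1,0))
def L : List M4 :=
[((1,0), (0,0), (1,-1), (-1,0)),
 ((-1,1), (2,0), (1,1), (1,-1)),
 ((1,0), (-1,-1), (0,0), (-1,0)),
 ((1,0), (0,0), (0,0), (1,0)),
 ((-1,1), (2,0), (0,1), (1,-1)),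
 ((1,0), (-1,-1), (1,-1), (-2,0)),
 ((1,-1), (-2,0), (0,-1), (-1,1)),
 ((-1,1), (1,0), (1,1), (0,-1)),
 ((-2,0), (1,1), (-1,1), (1,0)),
 ((0,-1), (-1,0), (-1,-1), (-1,1)),
 ((1,-1), (-2,0), (-1,-1), (-1,1)),
 ((-1,1), (1,0), (0,1), (1,0)),
 ((-2,0), (1,1), (-1,1), (2,0)),
 ((0,-1), (-1,0), (-1,0), (0,0)),
 ((-1,0), (0,0), (-1,1), (1,0)),
 ((1,-1), (-1,0), (0,-1), (-1,0)),
 ((0,0), (-1,0), (-1,0), (0,1)),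
 ((0,-1), (-1,1), (-1,-1), (0,1)),
 ((1,0), (-1,0), (0,-1), (-1,1)),
 ((-1,0), (1,0), (0,1), (1,-1)),
 ((-1,0), (0,0), (0,0), (-1,0)),
 ((1,-1), (-1,0), (-1,-1), (0,1)),
 ((0,0), (-1,0), (1,0), (-1,0)),
 ((0,-1), (-1,1), (-1,0), (1,1)),
 ((1,0), (-1,0), (1,0), (0,0)),
 ((-1,0), (1,0), (-1,0), (0,0)),
 ((-1,0), (1,1), (-1,1), (2,0)),
 ((0,0), (1,0), (-1,0), (1,0)),
 ((0,1), (1,-1), (1,0), (-1,-1)),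
 ((-1,-1), (-1,1), (-1,0), (0,1)),
 ((1,1), (1,-1), (1,0), (0,-1)),
 ((0,1), (1,0), (1,1), (1,-1)),
 ((1,0), (0,-1), (0,-1), (-1,0)),
 ((2,0), (-1,-1), (1,-1), (-1,0)),
 ((-1,0), (0,1), (0,1), (1,0)),
 ((-1,0), (1,1), (0,0), (1,0)),
 ((0,0), (1,0), (1,0), (0,-1)),
 ((0,1), (1,-1), (1,1), (0,-1)),
 ((-1,-1), (-1,1), (-2,0), (1,1)),
 ((1,1), (1,-1), (2,0), (-1,-1)),
 ((0,1), (1,0), (1,0), (0,0)),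
 ((1,0), (0,-1), (1,0), (-1,-1)),
 ((2,0), (-1,-1), (1,-1), (-2,0)),
 ((-1,0), (0,1), (-1,0), (1,1)),
 ((-1,-1), (0,1), (-1,0), (1,0)),
 ((1,1), (0,-1), (1,0), (-1,0)),
 ((-1,-1), (0,1), (-2,0), (1,1)),
 ((1,1), (0,-1), (2,0), (-1,-1))]

def χ (x : Z2) : ZMod 3 := (x.1 : ZMod 3) + (x.2 : ZMod 3)


set_option maxHeartbeats 12000000 in
lemma hclosed : ∀ x ∈ L, ∀ y ∈ L, mmul x y ∈ L := by decide

set_option maxHeartbeats 12000000 in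
lemma hinv : ∀ x ∈ L, ∃ y ∈ L, mmul x y = mone ∧ mmul y x = mone := by decide

set_option maxHeartbeats 4000000 in
lemma hmem : a1 ∈ L ∧ a2 ∈ L ∧ a3 ∈ L ∧ mone ∈ L :=
  ⟨by decide, by decide, by decide, by decide⟩

set_option maxHeartbeats 4000000 in
lemma hnodup : L.Nodup := by decide

set_option maxHeartbeats 12000000 in
set_option maxRecDepth 100000 in
lemma hcert : ∀ i : Fin L.length, 3 ≤ i.1 →
    ∃ j k : Fin L.length, j.1 < i.1 ∧ k.1 < i.1 ∧ mmul (L.get j) (L.get k) = L.get i := by decide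

set_option maxHeartbeats 12000000 in
lemma hχinj : ∀ x ∈ L, ∀ y ∈ L,
    (χ x.1 = χ y.1 ∧ χ x.2.1 = χ y.2.1 ∧ χ x.2.2.1 = χ y.2.2.1 ∧ χ x.2.2.2 = χ y.2.2.2) → x = y := by
  decide
section Glue

open Matrix

lemma s2_mul_s2 : s2 * s2 = -2 := by
  have h : ((Real.sqrt 2 : ℝ) : ℂ) * ((Real.sqrt 2 : ℝ) : ℂ) = 2 := by
    rw [← Complex.ofReal_mul, Real.mul_self_sqrt (by norm_num)]
    norm_num
  calc s2 * s2 = Complex.I * Complex.I * (((Real.sqrt 2 : ℝ) : ℂ) * ((Real.sqrt 2 : ℝ) : ℂ)) := by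
        rw [s2]; ring
    _ = -2 := by rw [Complex.I_mul_I, h]; ring

noncomputable def toC (x : Z2) : ℂ := (x.1 : ℂ) + (x.2 : ℂ) * s2

lemma toC_add (x y : Z2) : toC (zadd x y) = toC x + toC y := by
  simp only [toC, zadd]; push_cast; ring

lemma toC_mul (x y : Z2) : toC (zmul x y) = toC x * toC y := by
  simp only [toC, zmul]
  push_cast
  linear_combination (-((x.2 : ℂ) * (y.2 : ℂ))) * s2_mul_s2

lemma toC_inj : Function.Injective toC := by
  rintro ⟨a, b⟩ ⟨c, d⟩ h
  simp only [toC, s2] at h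
  have h1 := congrArg Complex.re h
  have h2 := congrArg Complex.im h
  simp [Complex.add_re, Complex.add_im, Complex.mul_re, Complex.mul_im] at h1 h2
  have ha : a = c := by exact_mod_cast h1
  have hb : b = d := by exact_mod_cast h2
  cases ha; cases hb; rfl

noncomputable def toM (X : M4) : Matrix (Fin 2) (Fin 2) ℂ :=
  !![toC X.1, toC X.2.1; toC X.2.2.1, toC X.2.2.2]

lemma toM_mul (X Y : M4) : toM (mmul X Y) = toM X * toM Y := by
  rw [toM, toM, toM, Matrix.mul_fin_two]
  simp only [mmul, toC_add, toC_mul]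

lemma toM_one : toM mone = 1 := by
  rw [toM, Matrix.one_fin_two]
  norm_num [mone, toC]

lemma toM_inj : Function.Injective toM := by
  rintro ⟨x1, x2, x3, x4⟩ ⟨y1, y2, y3, y4⟩ h
  have h00 := congrFun (congrFun h 0) 0
  have h01 := congrFun (congrFun h 0) 1
  have h10 := congrFun (congrFun h 1) 0
  have h11 := congrFun (congrFun h 1) 1
  simp only [toM, Matrix.cons_val', Matrix.cons_val_zero, Matrix.cons_val_one, Matrix.head_cons,
    Matrix.empty_val', Matrix.cons_val_fin_one, Matrix.head_fin_const, Matrix.of_apply] at h00 h01 h10 h11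
  have e1 := toC_inj h00
  have e2 := toC_inj h01
  have e3 := toC_inj h10
  have e4 := toC_inj h11
  simp_all

lemma hA1 : toM a1 = A₁ := by
  ext i j
  fin_cases i <;> fin_cases j <;> simp [toM, A₁, a1, toC] <;> push_cast <;> ring

lemma hA2 : toM a2 = A₂ := by
  ext i j
  fin_cases i <;> fin_cases j <;> simp [toM, A₂, a2, toC] <;> push_cast <;> ring

lemma hA3 : toM a3 = A₃ := by
  ext i j
  fin_cases i <;> fin_cases j <;> simp [toM, A₃, a3, toC] <;> push_cast <;> ring

lemma exists_unit {x : M4} (hx : x ∈ L) :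
    ∃ g : GL (Fin 2) ℂ, (↑g : Matrix (Fin 2) (Fin 2) ℂ) = toM x := by
  obtain ⟨y, hy, e1, e2⟩ := hinv x hx
  exact ⟨⟨toM x, toM y, by rw [← toM_mul, e1, toM_one], by rw [← toM_mul, e2, toM_one]⟩, rfl⟩

noncomputable def H : Subgroup (GL (Fin 2) ℂ) where
  carrier := {g | ∃ x ∈ L, toM x = (↑g : Matrix (Fin 2) (Fin 2) ℂ)}
  one_mem' := ⟨mone, hmem.2.2.2, by rw [toM_one]; rfl⟩
  mul_mem' := by
    rintro a b ⟨x, hx, ex⟩ ⟨y, hy, ey⟩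
    exact ⟨mmul x y, hclosed x hx y hy, by rw [toM_mul, ex, ey, Units.val_mul]⟩
  inv_mem' := by
    rintro g ⟨x, hx, ex⟩
    obtain ⟨y, hy, e1, e2⟩ := hinv x hx
    refine ⟨y, hy, ?_⟩
    have h2' : toM y * (↑g : Matrix (Fin 2) (Fin 2) ℂ) = 1 := by
      rw [← ex, ← toM_mul, e2, toM_one]
    calc toM y = toM y * ((↑g : Matrix (Fin 2) (Fin 2) ℂ) * (↑g⁻¹ : Matrix (Fin 2) (Fin 2) ℂ)) := by
          rw [← Units.val_mul, mul_inv_cancel, Units.val_one, mul_one]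
      _ = (toM y * (↑g : Matrix (Fin 2) (Fin 2) ℂ)) * (↑g⁻¹ : Matrix (Fin 2) (Fin 2) ℂ) := by
          rw [mul_assoc]
      _ = (↑g⁻¹ : Matrix (Fin 2) (Fin 2) ℂ) := by rw [h2', one_mul]

lemma mem_H_iff {g : GL (Fin 2) ℂ} :
    g ∈ H ↔ ∃ x ∈ L, toM x = (↑g : Matrix (Fin 2) (Fin 2) ℂ) := Iff.rfl

lemma gen_mem {x : M4} (hx : x ∈ ([a1, a2, a3] : List M4)) :
    toM x ∈ ({A₁, A₂, A₃} : Set (Matrix (Fin 2) (Fin 2) ℂ)) := by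
  simp only [List.mem_cons, List.not_mem_nil, or_false] at hx
  rcases hx with rfl | rfl | rfl
  · rw [hA1]; exact Set.mem_insert _ _
  · rw [hA2]; exact Set.mem_insert_of_mem _ (Set.mem_insert _ _)
  · rw [hA3]
    exact Set.mem_insert_of_mem _ (Set.mem_insert_of_mem _ rfl)

lemma key : ∀ n : ℕ, ∀ h : n < L.length,
    ∃ g ∈ genGL2 {A₁, A₂, A₃}, (↑g : Matrix (Fin 2) (Fin 2) ℂ) = toM (L.get ⟨n, h⟩) := by
  intro n
  induction n using Nat.strong_induction_on with
  | _ n IH =>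
    intro h
    by_cases h3 : 3 ≤ n
    · obtain ⟨j, k, hj, hk, he⟩ := hcert ⟨n, h⟩ h3
      obtain ⟨gj, hgj, ej⟩ := IH j.1 hj j.2
      obtain ⟨gk, hgk, ek⟩ := IH k.1 hk k.2
      refine ⟨gj * gk, mul_mem hgj hgk, ?_⟩
      rw [Units.val_mul, ej, ek, ← toM_mul]
      exact congrArg toM he
    · push_neg at h3
      have hgm : L.get ⟨n, h⟩ ∈ ([a1, a2, a3] : List M4) := by
        interval_cases n
        · exact List.Mem.head _
        · exact List.Mem.tail _ (List.Mem.head _)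
        · exact List.Mem.tail _ (List.Mem.tail _ (List.Mem.head _))
      obtain ⟨g, hg⟩ := exists_unit (L.get_mem _)
      refine ⟨g, Subgroup.subset_closure ?_, hg⟩
      show (↑g : Matrix (Fin 2) (Fin 2) ℂ) ∈ ({A₁, A₂, A₃} : Set (Matrix (Fin 2) (Fin 2) ℂ))
      rw [hg]
      exact gen_mem hgm

lemma Heq : genGL2 {A₁, A₂, A₃} = H := by
  apply le_antisymm
  · rw [genGL2, Subgroup.closure_le]
    rintro g hg
    simp only [Set.mem_setOf_eq, Set.mem_insert_iff, Set.mem_singleton_iff] at hg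
    rcases hg with h | h | h
    · exact ⟨a1, hmem.1, by rw [hA1, h]⟩
    · exact ⟨a2, hmem.2.1, by rw [hA2, h]⟩
    · exact ⟨a3, hmem.2.2.1, by rw [hA3, h]⟩
  · rintro g ⟨x, hx, ex⟩
    obtain ⟨i, hi⟩ := List.mem_iff_get.mp hx
    obtain ⟨g', hg', e'⟩ := key i.1 i.2
    have hgg : g = g' := by
      apply Units.ext
      rw [← ex, ← hi]
      exact e'.symm
    rw [hgg]
    exact hg'

noncomputable def F : Fin L.length → H := fun i =>
  ⟨(exists_unit (L.get_mem i)).choose,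
   ⟨L.get i, L.get_mem i, (exists_unit (L.get_mem i)).choose_spec.symm⟩⟩

lemma F_coe (i : Fin L.length) :
    (↑(F i : GL (Fin 2) ℂ) : Matrix (Fin 2) (Fin 2) ℂ) = toM (L.get i) :=
  (exists_unit (L.get_mem i)).choose_spec

lemma F_bij : Function.Bijective F := by
  constructor
  · intro i j hij
    have : toM (L.get i) = toM (L.get j) := by
      rw [← F_coe, ← F_coe, hij]
    exact (List.nodup_iff_injective_get.mp hnodup) (toM_inj this)
  · rintro ⟨g, x, hx, ex⟩
    obtain ⟨i, hi⟩ := List.mem_iff_get.mp hx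
    refine ⟨i, ?_⟩
    apply Subtype.ext
    apply Units.ext
    show (↑(F i : GL (Fin 2) ℂ) : Matrix (Fin 2) (Fin 2) ℂ) = ↑g
    rw [F_coe, hi]
    exact ex

lemma cardH : Nat.card H = 48 := by
  rw [Nat.card_congr (Equiv.ofBijective F F_bij).symm, Nat.card_eq_fintype_card,
    Fintype.card_fin]
  rfl

-- ZMod 3 side

def χm (X : M4) : Matrix (Fin 2) (Fin 2) (ZMod 3) :=
  !![χ X.1, χ X.2.1; χ X.2.2.1, χ X.2.2.2]

lemma χ_add (x y : Z2) : χ (zadd x y) = χ x + χ y := by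
  simp only [χ, zadd]; push_cast; ring

lemma χ_mul (x y : Z2) : χ (zmul x y) = χ x * χ y := by
  have h3 : (3 : ZMod 3) = 0 := rfl
  simp only [χ, zmul]
  push_cast
  linear_combination (-((x.2 : ZMod 3) * (y.2 : ZMod 3))) * h3

lemma χm_mul (X Y : M4) : χm (mmul X Y) = χm X * χm Y := by
  rw [χm, χm, χm, Matrix.mul_fin_two]
  simp only [mmul, χ_add, χ_mul]

lemma χm_one : χm mone = 1 := by
  rw [χm, Matrix.one_fin_two]
  norm_num [mone, χ]

lemma exists_unitZ {x : M4} (hx : x ∈ L) :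
    ∃ u : GL (Fin 2) (ZMod 3), (↑u : Matrix (Fin 2) (Fin 2) (ZMod 3)) = χm x := by
  obtain ⟨y, hy, e1, e2⟩ := hinv x hx
  exact ⟨⟨χm x, χm y, by rw [← χm_mul, e1, χm_one], by rw [← χm_mul, e2, χm_one]⟩, rfl⟩

lemma χm_injOn {x y : M4} (hx : x ∈ L) (hy : y ∈ L) (h : χm x = χm y) : x = y := by
  have h00 := congrFun (congrFun h 0) 0
  have h01 := congrFun (congrFun h 0) 1
  have h10 := congrFun (congrFun h 1) 0
  have h11 := congrFun (congrFun h 1) 1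
  simp only [χm, Matrix.cons_val', Matrix.cons_val_zero, Matrix.cons_val_one, Matrix.head_cons,
    Matrix.empty_val', Matrix.cons_val_fin_one, Matrix.head_fin_const, Matrix.of_apply] at h00 h01 h10 h11
  exact hχinj x hx y hy ⟨h00, h01, h10, h11⟩

noncomputable def pick (g : H) : M4 := (mem_H_iff.mp g.2).choose

lemma pick_mem (g : H) : pick g ∈ L := (mem_H_iff.mp g.2).choose_spec.1

lemma pick_spec (g : H) :
    toM (pick g) = (↑(g : GL (Fin 2) ℂ) : Matrix (Fin 2) (Fin 2) ℂ) :=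
  (mem_H_iff.mp g.2).choose_spec.2

noncomputable def f : H →ₙ* GL (Fin 2) (ZMod 3) where
  toFun g := (exists_unitZ (pick_mem g)).choose
  map_mul' g h := by
    apply Units.ext
    rw [(exists_unitZ (pick_mem (g * h))).choose_spec, Units.val_mul,
      (exists_unitZ (pick_mem g)).choose_spec, (exists_unitZ (pick_mem h)).choose_spec,
      ← χm_mul]
    refine congrArg χm (toM_inj ?_)
    rw [toM_mul, pick_spec, pick_spec, pick_spec]
    simp
  
lemma f_inj : Function.Injective f := by
  intro g h hgh
  have e : χm (pick g) = χm (pick h) := by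
    rw [← (exists_unitZ (pick_mem g)).choose_spec, ← (exists_unitZ (pick_mem h)).choose_spec]
    exact congrArg Units.val hgh
  have := χm_injOn (pick_mem g) (pick_mem h) e
  apply Subtype.ext
  apply Units.ext
  rw [← pick_spec g, ← pick_spec h, this]

lemma cardGL3 : Nat.card (GL (Fin 2) (ZMod 3)) = 48 := by
  rw [Matrix.card_GL_field]
  simp [ZMod.card, Fin.prod_univ_two]

lemma f_bij : Function.Bijective f := by
  have hfin : Finite H := Finite.of_equiv _ (Equiv.ofBijective F F_bij)
  rw [Nat.bijective_iff_injective_and_card]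
  exact ⟨f_inj, by rw [cardH, cardGL3]⟩

end Glue

/-- the subgroup of GL(2,ℂ) generated by A₁, A₂, A₃ has exactly 48
elements and is isomorphic to GL(2,𝔽₃). -/
theorem stmt_14 :
    Nat.card (genGL2 {A₁, A₂, A₃}) = 48 ∧
    Nonempty ((genGL2 {A₁, A₂, A₃}) ≃* GL (Fin 2) (ZMod 3)) := by
  rw [Heq]
  exact ⟨cardH, ⟨MulEquiv.ofBijective f f_bij⟩⟩
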